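/- Let n ≥ 2 and let G be the anticycle on the n+3 vertices x, z_1, z_2, y_1,…,y_n, with J = I(H) the edge ideal of the induced antipath H = G \ {x}. Fix 1 ≤ i ≤ j ≤ n with (i,j) ≠ (n,n), and let I' = J^2 + (x z_1 z_2 y_l : 1 ≤ l ≤ n) + ( x y_{i'} y_{j'} z_2 : 1 ≤ i' ≤ j' ≤ n, (i',j') ≠ (n,n), (i',j') strictly dictionary-smaller than (i,j) ). Then the colon ideal I' : (x y_i y_j z_2) is generated by a subset of the variables of R. -/

import Mathlib

set_option maxHeartbeats 3200000


open MvPolynomial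

/-! The anticycle `G` on the `n+3` vertices `x, z₁, y₁, …, y_n, z₂`, realized on `Fin (n+3)`
with the cycle labeling `x = 0`, `z₁ = 1`, `y_i = i+1` (so `y_i` has index `i+2` for the
0-indexed `i : Fin n`), `z₂ = n+2`.  The non-edges of `G` are exactly the consecutive pairs
on the cycle `x ∼ z₁ ∼ y₁ ∼ ⋯ ∼ y_n ∼ z₂ ∼ x`. -/

/-- The vertex `x`. -/
def vx (n : ℕ) : Fin (n + 3) := ⟨0, by omega⟩
/-- The vertex `z₁`. -/
def vz1 (n : ℕ) : Fin (n + 3) := ⟨1, by omega⟩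
/-- The vertex `z₂`. -/
def vz2 (n : ℕ) : Fin (n + 3) := ⟨n + 2, by omega⟩
/-- The vertex `y_i` (0-indexed: `vy n i` is `y_{i+1}` of the paper). -/
def vy (n : ℕ) (i : Fin n) : Fin (n + 3) := ⟨(i : ℕ) + 2, by omega⟩

/-- The edge ideal `J = I(H)` of the induced antipath `H = G \ {x}` on the vertices
`z₁, y₁, …, y_n, z₂` (indices `1, …, n+2`): its edges are the pairs of non-consecutive
indices among `1, …, n+2`. -/
noncomputable def Jideal (K : Type*) [Field K] (n : ℕ) :
    Ideal (MvPolynomial (Fin (n + 3)) K) :=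
  Ideal.span { m | ∃ a b : Fin (n + 3),
    1 ≤ (a : ℕ) ∧ (a : ℕ) + 2 ≤ (b : ℕ) ∧ m = X a * X b }


@[simp] lemma vx_val (n : ℕ) : ((vx n) : ℕ) = 0 := rfl
@[simp] lemma vz1_val (n : ℕ) : ((vz1 n) : ℕ) = 1 := rfl
@[simp] lemma vz2_val (n : ℕ) : ((vz2 n) : ℕ) = n + 2 := rfl
@[simp] lemma vy_val (n : ℕ) (l : Fin n) : ((vy n l) : ℕ) = (l : ℕ) + 2 := rfl

noncomputable def sgl {α : Type*} (v : α) : α →₀ ℕ := Finsupp.single v 1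

def Svar (n : ℕ) (i j : Fin n) : Set (Fin (n + 3)) :=
  {v | (v : ℕ) = 1 ∨ ((v : ℕ) = n + 2 ∧ (j : ℕ) + 2 ≤ n) ∨
    ∃ l : Fin n, v = vy n l ∧
      ((l : ℕ) < (j : ℕ) ∨ ((i : ℕ) + 2 ≤ (j : ℕ) ∧ (l : ℕ) + 2 ≤ n) ∨
       (((i : ℕ) + 2 ≤ (l : ℕ) ∨ (l : ℕ) + 2 ≤ (i : ℕ)) ∧ (j : ℕ) + 2 ≤ n) ∨
       (((j : ℕ) + 2 ≤ (l : ℕ) ∨ (l : ℕ) + 2 ≤ (j : ℕ)) ∧ (i : ℕ) + 2 ≤ n))}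

def Gset (n : ℕ) (i j : Fin n) : Set (Fin (n + 3) →₀ ℕ) :=
  {s | (∃ a b c d : Fin (n + 3), (1 ≤ (a : ℕ) ∧ (a : ℕ) + 2 ≤ (b : ℕ)) ∧
          (1 ≤ (c : ℕ) ∧ (c : ℕ) + 2 ≤ (d : ℕ)) ∧ s = sgl a + sgl b + (sgl c + sgl d)) ∨
    (∃ l : Fin n, s = sgl (vx n) + sgl (vz1 n) + sgl (vz2 n) + sgl (vy n l)) ∨
    (∃ i' j' : Fin n, i' ≤ j' ∧ ¬((i' : ℕ) = n - 1 ∧ (j' : ℕ) = n - 1) ∧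
       (i' < i ∨ (i' = i ∧ j' < j)) ∧
       s = sgl (vx n) + sgl (vy n i') + sgl (vy n j') + sgl (vz2 n))}

noncomputable def emv (n : ℕ) (i j : Fin n) : Fin (n + 3) →₀ ℕ :=
  sgl (vx n) + sgl (vy n i) + sgl (vy n j) + sgl (vz2 n)

lemma mem_Svar_y (n : ℕ) (i j : Fin n) (w : Fin (n + 3)) (h2 : 2 ≤ (w : ℕ))
    (h3 : (w : ℕ) ≤ n + 1)
    (hcy : (w : ℕ) - 2 < (j : ℕ) ∨ ((i : ℕ) + 2 ≤ (j : ℕ) ∧ (w : ℕ) ≤ n) ∨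
      (((i : ℕ) + 4 ≤ (w : ℕ) ∨ (w : ℕ) ≤ (i : ℕ)) ∧ (j : ℕ) + 2 ≤ n) ∨
      (((j : ℕ) + 4 ≤ (w : ℕ) ∨ (w : ℕ) ≤ (j : ℕ)) ∧ (i : ℕ) + 2 ≤ n)) :
    w ∈ Svar n i j := by
  have hl : (w : ℕ) - 2 < n := by omega
  refine Or.inr (Or.inr ⟨⟨(w : ℕ) - 2, hl⟩, ?_, ?_⟩)
  · apply Fin.ext
    show (w : ℕ) = (w : ℕ) - 2 + 2
    omega
  · show ((w : ℕ) - 2 < (j : ℕ) ∨ ((i : ℕ) + 2 ≤ (j : ℕ) ∧ ((w : ℕ) - 2) + 2 ≤ n) ∨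
      (((i : ℕ) + 2 ≤ (w : ℕ) - 2 ∨ ((w : ℕ) - 2) + 2 ≤ (i : ℕ)) ∧ (j : ℕ) + 2 ≤ n) ∨
      (((j : ℕ) + 2 ≤ (w : ℕ) - 2 ∨ ((w : ℕ) - 2) + 2 ≤ (j : ℕ)) ∧ (i : ℕ) + 2 ≤ n))
    omega

lemma lemA (n : ℕ) (hn : 2 ≤ n) (i j : Fin n) (hij : i ≤ j)
    (hnn : ¬((i : ℕ) = n - 1 ∧ (j : ℕ) = n - 1)) (μ : Fin (n + 3) →₀ ℕ)
    (hμ : ∀ v ∈ Svar n i j, μ v = 0) (g : Fin (n + 3) →₀ ℕ) (hg : g ∈ Gset n i j)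
    (hle : g ≤ μ + emv n i j) : False := by
  have hiv := i.isLt
  have hjv := j.isLt
  have hijv : (i : ℕ) ≤ (j : ℕ) := hij
  rcases hg with ⟨a, b, c, d, ⟨ha1, hab⟩, ⟨hc1, hcd⟩, rfl⟩ | ⟨l, rfl⟩ |
    ⟨i', j', hij', hnn', hear, rfl⟩
  · -- J² generators
    have hbv := b.isLt
    have hdv := d.isLt
    by_cases hc1n : (j : ℕ) + 2 ≤ n
    · by_cases hc2 : (i : ℕ) + 2 ≤ (j : ℕ)
      · -- case 1 : all variables except x vanish
        have hall : ∀ w : Fin (n + 3), 1 ≤ (w : ℕ) → μ w = 0 := by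
          intro w hw
          refine hμ w ?_
          rcases eq_or_ne ((w : ℕ)) 1 with h1 | h1
          · exact Or.inl h1
          rcases eq_or_ne ((w : ℕ)) (n + 2) with h2 | h2
          · exact Or.inr (Or.inl ⟨h2, hc1n⟩)
          · have hw3 := w.isLt
            exact mem_Svar_y n i j w (by omega) (by omega) (by omega)
        have hμa : μ a = 0 := hall a (by omega)
        have hμb : μ b = 0 := hall b (by omega)
        have hμc : μ c = 0 := hall c (by omega)
        have hμd : μ d = 0 := hall d (by omega)
        have la : (a : ℕ) = (i : ℕ) + 2 ∨ (a : ℕ) = (j : ℕ) + 2 ∨ (a : ℕ) = n + 2 := by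
          have h1 := Finsupp.le_def.mp hle a
          simp only [sgl, emv, Finsupp.add_apply, Finsupp.single_apply, Fin.ext_iff,
            vx_val, vz1_val, vz2_val, vy_val] at h1
          split_ifs at h1 <;> first | (exact False.elim ‹False›) | omega
        have lb : (b : ℕ) = (i : ℕ) + 2 ∨ (b : ℕ) = (j : ℕ) + 2 ∨ (b : ℕ) = n + 2 := by
          have h1 := Finsupp.le_def.mp hle b
          simp only [sgl, emv, Finsupp.add_apply, Finsupp.single_apply, Fin.ext_iff,
            vx_val, vz1_val, vz2_val, vy_val] at h1
          split_ifs at h1 <;> first | (exact False.elim ‹False›) | omega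
        have lc : (c : ℕ) = (i : ℕ) + 2 ∨ (c : ℕ) = (j : ℕ) + 2 ∨ (c : ℕ) = n + 2 := by
          have h1 := Finsupp.le_def.mp hle c
          simp only [sgl, emv, Finsupp.add_apply, Finsupp.single_apply, Fin.ext_iff,
            vx_val, vz1_val, vz2_val, vy_val] at h1
          split_ifs at h1 <;> first | (exact False.elim ‹False›) | omega
        have ld : (d : ℕ) = (i : ℕ) + 2 ∨ (d : ℕ) = (j : ℕ) + 2 ∨ (d : ℕ) = n + 2 := by
          have h1 := Finsupp.le_def.mp hle d
          simp only [sgl, emv, Finsupp.add_apply, Finsupp.single_apply, Fin.ext_iff,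
            vx_val, vz1_val, vz2_val, vy_val] at h1
          split_ifs at h1 <;> first | (exact False.elim ‹False›) | omega
        have hac : (a : ℕ) ≠ (c : ℕ) := by
          intro he
          have h1 := Finsupp.le_def.mp hle a
          simp only [sgl, emv, Finsupp.add_apply, Finsupp.single_apply, Fin.ext_iff,
            vx_val, vz1_val, vz2_val, vy_val] at h1
          split_ifs at h1 <;> first | (exact False.elim ‹False›) | omega
        have had : (a : ℕ) ≠ (d : ℕ) := by
          intro he
          have h1 := Finsupp.le_def.mp hle a
          simp only [sgl, emv, Finsupp.add_apply, Finsupp.single_apply, Fin.ext_iff,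
            vx_val, vz1_val, vz2_val, vy_val] at h1
          split_ifs at h1 <;> first | (exact False.elim ‹False›) | omega
        have hbc : (b : ℕ) ≠ (c : ℕ) := by
          intro he
          have h1 := Finsupp.le_def.mp hle b
          simp only [sgl, emv, Finsupp.add_apply, Finsupp.single_apply, Fin.ext_iff,
            vx_val, vz1_val, vz2_val, vy_val] at h1
          split_ifs at h1 <;> first | (exact False.elim ‹False›) | omega
        have hbd : (b : ℕ) ≠ (d : ℕ) := by
          intro he
          have h1 := Finsupp.le_def.mp hle b
          simp only [sgl, emv, Finsupp.add_apply, Finsupp.single_apply, Fin.ext_iff,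
            vx_val, vz1_val, vz2_val, vy_val] at h1
          split_ifs at h1 <;> first | (exact False.elim ‹False›) | omega
        omega
      · -- case 2 : j ≤ i+1 and j+2 ≤ n
        have hall2 : ∀ w : Fin (n + 3), 1 ≤ (w : ℕ) → (w : ℕ) ≠ (i : ℕ) + 2 →
            (w : ℕ) ≠ (i : ℕ) + 3 → μ w = 0 := by
          intro w hw hw1 hw2
          refine hμ w ?_
          rcases eq_or_ne ((w : ℕ)) 1 with h1 | h1
          · exact Or.inl h1
          rcases eq_or_ne ((w : ℕ)) (n + 2) with h2 | h2
          · exact Or.inr (Or.inl ⟨h2, hc1n⟩)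
          · have hw3 := w.isLt
            exact mem_Svar_y n i j w (by omega) (by omega) (by omega)
        have la : (a : ℕ) = (i : ℕ) + 2 ∨ (a : ℕ) = (i : ℕ) + 3 ∨ (a : ℕ) = n + 2 := by
          by_cases e1 : (a : ℕ) = (i : ℕ) + 2
          · exact Or.inl e1
          by_cases e2 : (a : ℕ) = (i : ℕ) + 3
          · exact Or.inr (Or.inl e2)
          have hμa := hall2 a (by omega) e1 e2
          have h1 := Finsupp.le_def.mp hle a
          simp only [sgl, emv, Finsupp.add_apply, Finsupp.single_apply, Fin.ext_iff,
            vx_val, vz1_val, vz2_val, vy_val] at h1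
          split_ifs at h1 <;> first | (exact False.elim ‹False›) | omega
        have lb : (b : ℕ) = (i : ℕ) + 2 ∨ (b : ℕ) = (i : ℕ) + 3 ∨ (b : ℕ) = n + 2 := by
          by_cases e1 : (b : ℕ) = (i : ℕ) + 2
          · exact Or.inl e1
          by_cases e2 : (b : ℕ) = (i : ℕ) + 3
          · exact Or.inr (Or.inl e2)
          have hμb := hall2 b (by omega) e1 e2
          have h1 := Finsupp.le_def.mp hle b
          simp only [sgl, emv, Finsupp.add_apply, Finsupp.single_apply, Fin.ext_iff,
            vx_val, vz1_val, vz2_val, vy_val] at h1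
          split_ifs at h1 <;> first | (exact False.elim ‹False›) | omega
        have lc : (c : ℕ) = (i : ℕ) + 2 ∨ (c : ℕ) = (i : ℕ) + 3 ∨ (c : ℕ) = n + 2 := by
          by_cases e1 : (c : ℕ) = (i : ℕ) + 2
          · exact Or.inl e1
          by_cases e2 : (c : ℕ) = (i : ℕ) + 3
          · exact Or.inr (Or.inl e2)
          have hμc := hall2 c (by omega) e1 e2
          have h1 := Finsupp.le_def.mp hle c
          simp only [sgl, emv, Finsupp.add_apply, Finsupp.single_apply, Fin.ext_iff,
            vx_val, vz1_val, vz2_val, vy_val] at h1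
          split_ifs at h1 <;> first | (exact False.elim ‹False›) | omega
        have ld : (d : ℕ) = (i : ℕ) + 2 ∨ (d : ℕ) = (i : ℕ) + 3 ∨ (d : ℕ) = n + 2 := by
          by_cases e1 : (d : ℕ) = (i : ℕ) + 2
          · exact Or.inl e1
          by_cases e2 : (d : ℕ) = (i : ℕ) + 3
          · exact Or.inr (Or.inl e2)
          have hμd := hall2 d (by omega) e1 e2
          have h1 := Finsupp.le_def.mp hle d
          simp only [sgl, emv, Finsupp.add_apply, Finsupp.single_apply, Fin.ext_iff,
            vx_val, vz1_val, vz2_val, vy_val] at h1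
          split_ifs at h1 <;> first | (exact False.elim ‹False›) | omega
        have hμz2 : μ (vz2 n) = 0 :=
          hall2 (vz2 n) (by simp only [vz2_val]; omega) (by simp only [vz2_val]; omega)
            (by simp only [vz2_val]; omega)
        have h1 := Finsupp.le_def.mp hle (vz2 n)
        simp only [sgl, emv, Finsupp.add_apply, Finsupp.single_apply, Fin.ext_iff,
          vx_val, vz1_val, vz2_val, vy_val] at h1
        split_ifs at h1 <;> first | (exact False.elim ‹False›) | omega
    · -- case 3 : j = n - 1
      have hj3 : (j : ℕ) = n - 1 := by omega
      have hall3 : ∀ w : Fin (n + 3), 1 ≤ (w : ℕ) → (w : ℕ) ≤ n → μ w = 0 := by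
        intro w h1w h2w
        refine hμ w ?_
        rcases eq_or_ne ((w : ℕ)) 1 with h1 | h1
        · exact Or.inl h1
        · exact mem_Svar_y n i j w (by omega) (by omega) (by omega)
      have la : (a : ℕ) = (i : ℕ) + 2 ∨ (a : ℕ) = n + 1 ∨ (a : ℕ) = n + 2 := by
        by_cases e1 : (a : ℕ) = n + 1
        · exact Or.inr (Or.inl e1)
        by_cases e2 : (a : ℕ) = n + 2
        · exact Or.inr (Or.inr e2)
        have hav := a.isLt
        have hμa := hall3 a (by omega) (by omega)
        have h1 := Finsupp.le_def.mp hle a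
        simp only [sgl, emv, Finsupp.add_apply, Finsupp.single_apply, Fin.ext_iff,
          vx_val, vz1_val, vz2_val, vy_val] at h1
        split_ifs at h1 <;> first | (exact False.elim ‹False›) | omega
      have lc : (c : ℕ) = (i : ℕ) + 2 ∨ (c : ℕ) = n + 1 ∨ (c : ℕ) = n + 2 := by
        by_cases e1 : (c : ℕ) = n + 1
        · exact Or.inr (Or.inl e1)
        by_cases e2 : (c : ℕ) = n + 2
        · exact Or.inr (Or.inr e2)
        have hcv := c.isLt
        have hμc := hall3 c (by omega) (by omega)
        have h1 := Finsupp.le_def.mp hle c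
        simp only [sgl, emv, Finsupp.add_apply, Finsupp.single_apply, Fin.ext_iff,
          vx_val, vz1_val, vz2_val, vy_val] at h1
        split_ifs at h1 <;> first | (exact False.elim ‹False›) | omega
      have haa : (a : ℕ) = (i : ℕ) + 2 := by omega
      have hcc : (c : ℕ) = (i : ℕ) + 2 := by omega
      have hμyi : μ (vy n i) = 0 :=
        hall3 (vy n i) (by simp only [vy_val]; omega) (by simp only [vy_val]; omega)
      have h1 := Finsupp.le_def.mp hle (vy n i)
      simp only [sgl, emv, Finsupp.add_apply, Finsupp.single_apply, Fin.ext_iff,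
        vx_val, vz1_val, vz2_val, vy_val] at h1
      split_ifs at h1 <;> first | (exact False.elim ‹False›) | omega
  · -- x z₁ z₂ y_l generators
    have hz1 : μ (vz1 n) = 0 := hμ _ (Or.inl rfl)
    have hlv := l.isLt
    have h1 := Finsupp.le_def.mp hle (vz1 n)
    simp only [sgl, emv, Finsupp.add_apply, Finsupp.single_apply, Fin.ext_iff,
      vx_val, vz1_val, vz2_val, vy_val] at h1
    split_ifs at h1 <;> first | (exact False.elim ‹False›) | omega
  · -- earlier x y_i' y_j' z₂ generators
    rcases hear with hlt | ⟨heq, hlt⟩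
    · have hi'v := i'.isLt
      have hlv : (i' : ℕ) < (i : ℕ) := hlt
      have hv : μ (vy n i') = 0 := hμ _ (Or.inr (Or.inr ⟨i', rfl, Or.inl (by omega)⟩))
      have h1 := Finsupp.le_def.mp hle (vy n i')
      simp only [sgl, emv, Finsupp.add_apply, Finsupp.single_apply, Fin.ext_iff,
        vx_val, vz1_val, vz2_val, vy_val] at h1
      split_ifs at h1 <;> first | (exact False.elim ‹False›) | omega
    · subst heq
      have hj'v := j'.isLt
      have hlv : (j' : ℕ) < (j : ℕ) := hlt
      have hv : μ (vy n j') = 0 := hμ _ (Or.inr (Or.inr ⟨j', rfl, Or.inl (by omega)⟩))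
      have h1 := Finsupp.le_def.mp hle (vy n j')
      simp only [sgl, emv, Finsupp.add_apply, Finsupp.single_apply, Fin.ext_iff,
        vx_val, vz1_val, vz2_val, vy_val] at h1
      split_ifs at h1 <;> first | (exact False.elim ‹False›) | omega

lemma lemB (n : ℕ) (hn : 2 ≤ n) (i j : Fin n) (hij : i ≤ j)
    (hnn : ¬((i : ℕ) = n - 1 ∧ (j : ℕ) = n - 1)) (v : Fin (n + 3))
    (hv : v ∈ Svar n i j) :
    ∃ g ∈ Gset n i j, g ≤ sgl v + emv n i j := by
  have hiv := i.isLt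
  have hjv := j.isLt
  have hijv : (i : ℕ) ≤ (j : ℕ) := hij
  rcases hv with h1 | ⟨h2, hj2⟩ | ⟨l, rfl, hC⟩
  · -- v = z₁
    have hv1 : v = vz1 n := Fin.ext (by simp only [vz1_val]; exact h1)
    subst hv1
    refine ⟨_, Or.inr (Or.inl ⟨i, rfl⟩), ?_⟩
    rw [Finsupp.le_def]
    intro w
    simp only [sgl, emv, Finsupp.add_apply, Finsupp.single_apply, Fin.ext_iff,
      vx_val, vz1_val, vz2_val, vy_val]
    split_ifs <;> first | (exact False.elim ‹False›) | omega
  · -- v = z₂, j + 2 ≤ n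
    have hv1 : v = vz2 n := Fin.ext (by simp only [vz2_val]; exact h2)
    subst hv1
    refine ⟨_, Or.inl ⟨vy n i, vz2 n, vy n j, vz2 n,
      ⟨by simp only [vy_val]; omega, by simp only [vy_val, vz2_val]; omega⟩,
      ⟨by simp only [vy_val]; omega, by simp only [vy_val, vz2_val]; omega⟩, rfl⟩, ?_⟩
    rw [Finsupp.le_def]
    intro w
    simp only [sgl, emv, Finsupp.add_apply, Finsupp.single_apply, Fin.ext_iff,
      vx_val, vz1_val, vz2_val, vy_val]
    split_ifs <;> first | (exact False.elim ‹False›) | omega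
  · -- v = y_l
    have hlv := l.isLt
    rcases hC with hC | ⟨hC1, hC2⟩ | ⟨hC1, hC2⟩ | ⟨hC1, hC2⟩
    · -- l < j
      by_cases hli : (l : ℕ) < (i : ℕ)
      · refine ⟨_, Or.inr (Or.inr ⟨l, i, Fin.le_def.mpr (by omega), by omega,
          Or.inl (Fin.lt_def.mpr hli), rfl⟩), ?_⟩
        rw [Finsupp.le_def]
        intro w
        simp only [sgl, emv, Finsupp.add_apply, Finsupp.single_apply, Fin.ext_iff,
          vx_val, vz1_val, vz2_val, vy_val]
        split_ifs <;> first | (exact False.elim ‹False›) | omega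
      · refine ⟨_, Or.inr (Or.inr ⟨i, l, Fin.le_def.mpr (by omega), by omega,
          Or.inr ⟨rfl, Fin.lt_def.mpr hC⟩, rfl⟩), ?_⟩
        rw [Finsupp.le_def]
        intro w
        simp only [sgl, emv, Finsupp.add_apply, Finsupp.single_apply, Fin.ext_iff,
          vx_val, vz1_val, vz2_val, vy_val]
        split_ifs <;> first | (exact False.elim ‹False›) | omega
    · -- i + 2 ≤ j and l + 2 ≤ n
      refine ⟨_, Or.inl ⟨vy n i, vy n j, vy n l, vz2 n,
        ⟨by simp only [vy_val]; omega, by simp only [vy_val]; omega⟩,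
        ⟨by simp only [vy_val]; omega, by simp only [vy_val, vz2_val]; omega⟩, rfl⟩, ?_⟩
      rw [Finsupp.le_def]
      intro w
      simp only [sgl, emv, Finsupp.add_apply, Finsupp.single_apply, Fin.ext_iff,
        vx_val, vz1_val, vz2_val, vy_val]
      split_ifs <;> first | (exact False.elim ‹False›) | omega
    · -- |i - l| ≥ 2 and j + 2 ≤ n
      rcases hC1 with h | h
      · refine ⟨_, Or.inl ⟨vy n i, vy n l, vy n j, vz2 n,
          ⟨by simp only [vy_val]; omega, by simp only [vy_val]; omega⟩,
          ⟨by simp only [vy_val]; omega, by simp only [vy_val, vz2_val]; omega⟩, rfl⟩, ?_⟩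
        rw [Finsupp.le_def]
        intro w
        simp only [sgl, emv, Finsupp.add_apply, Finsupp.single_apply, Fin.ext_iff,
          vx_val, vz1_val, vz2_val, vy_val]
        split_ifs <;> first | (exact False.elim ‹False›) | omega
      · refine ⟨_, Or.inl ⟨vy n l, vy n i, vy n j, vz2 n,
          ⟨by simp only [vy_val]; omega, by simp only [vy_val]; omega⟩,
          ⟨by simp only [vy_val]; omega, by simp only [vy_val, vz2_val]; omega⟩, rfl⟩, ?_⟩
        rw [Finsupp.le_def]
        intro w
        simp only [sgl, emv, Finsupp.add_apply, Finsupp.single_apply, Fin.ext_iff,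
          vx_val, vz1_val, vz2_val, vy_val]
        split_ifs <;> first | (exact False.elim ‹False›) | omega
    · -- |j - l| ≥ 2 and i + 2 ≤ n
      rcases hC1 with h | h
      · refine ⟨_, Or.inl ⟨vy n j, vy n l, vy n i, vz2 n,
          ⟨by simp only [vy_val]; omega, by simp only [vy_val]; omega⟩,
          ⟨by simp only [vy_val]; omega, by simp only [vy_val, vz2_val]; omega⟩, rfl⟩, ?_⟩
        rw [Finsupp.le_def]
        intro w
        simp only [sgl, emv, Finsupp.add_apply, Finsupp.single_apply, Fin.ext_iff,
          vx_val, vz1_val, vz2_val, vy_val]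
        split_ifs <;> first | (exact False.elim ‹False›) | omega
      · refine ⟨_, Or.inl ⟨vy n l, vy n j, vy n i, vz2 n,
          ⟨by simp only [vy_val]; omega, by simp only [vy_val]; omega⟩,
          ⟨by simp only [vy_val]; omega, by simp only [vy_val, vz2_val]; omega⟩, rfl⟩, ?_⟩
        rw [Finsupp.le_def]
        intro w
        simp only [sgl, emv, Finsupp.add_apply, Finsupp.single_apply, Fin.ext_iff,
          vx_val, vz1_val, vz2_val, vy_val]
        split_ifs <;> first | (exact False.elim ‹False›) | omega

lemma X2 {R : Type*} [CommSemiring R] {σ : Type*} (a b : σ) :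
    (X a * X b : MvPolynomial σ R) = monomial (sgl a + sgl b) 1 := by
  show monomial (sgl a) (1 : R) * monomial (sgl b) 1 = _
  rw [monomial_mul, one_mul]

lemma X4 {R : Type*} [CommSemiring R] {σ : Type*} (a b c d : σ) :
    (X a * X b * X c * X d : MvPolynomial σ R)
      = monomial (sgl a + sgl b + sgl c + sgl d) 1 := by
  show monomial (sgl a) (1 : R) * monomial (sgl b) 1 * monomial (sgl c) 1 *
    monomial (sgl d) 1 = _
  rw [monomial_mul, monomial_mul, monomial_mul, one_mul, one_mul, one_mul]


/-- Fix `1 ≤ i ≤ j ≤ n` with `(i,j) ≠ (n,n)`.  With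
`I' = J² + (x z₁ z₂ y_l : 1 ≤ l ≤ n) + (x y_{i'} y_{j'} z₂ : i' ≤ j', (i',j') ≠ (n,n),
(i',j')` dictionary-smaller than `(i,j))`, the colon ideal `I' : (x y_i y_j z₂)` is
generated by a subset of the variables.  (Indices `i j : Fin n` are 0-indexed, so the
excluded pair `(n,n)` is `(n-1,n-1)`.) -/
theorem stage2b_colon (K : Type*) [Field K] (n : ℕ) (hn : 2 ≤ n) (i j : Fin n)
    (hij : i ≤ j) (hnn : ¬((i : ℕ) = n - 1 ∧ (j : ℕ) = n - 1)) :
    ∃ S : Set (Fin (n + 3)),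
      ((Jideal K n ^ 2 +
          Ideal.span { m | ∃ l : Fin n,
            m = X (vx n) * X (vz1 n) * X (vz2 n) * X (vy n l) } +
          Ideal.span { m | ∃ i' j' : Fin n, i' ≤ j' ∧
            ¬((i' : ℕ) = n - 1 ∧ (j' : ℕ) = n - 1) ∧
            (i' < i ∨ (i' = i ∧ j' < j)) ∧
            m = X (vx n) * X (vy n i') * X (vy n j') * X (vz2 n) }).colon
        ((Ideal.span {X (vx n) * X (vy n i) * X (vy n j) * X (vz2 n)} : Ideal (MvPolynomial (Fin (n + 3)) K)) : Set (MvPolynomial (Fin (n + 3)) K))) =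
      Ideal.span (MvPolynomial.X '' S) := by
  classical
  have hm : X (vx n) * X (vy n i) * X (vy n j) * X (vz2 n)
      = monomial (emv n i j) (1 : K) := by
    rw [X4]; rfl
  have hspan : (Jideal K n ^ 2 +
      Ideal.span { m | ∃ l : Fin n,
        m = X (vx n) * X (vz1 n) * X (vz2 n) * X (vy n l) } +
      Ideal.span { m | ∃ i' j' : Fin n, i' ≤ j' ∧
        ¬((i' : ℕ) = n - 1 ∧ (j' : ℕ) = n - 1) ∧
        (i' < i ∨ (i' = i ∧ j' < j)) ∧
        m = X (vx n) * X (vy n i') * X (vy n j') * X (vz2 n) })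
      = Ideal.span ((fun s => monomial s (1 : K)) '' Gset n i j) := by
    rw [Jideal, sq, Ideal.span_mul_span', Submodule.add_eq_sup, Submodule.add_eq_sup,
      ← Ideal.span_union, ← Ideal.span_union]
    congr 1
    ext p
    constructor
    · rintro ((hp | hp) | hp)
      · rw [Set.mem_mul] at hp
        obtain ⟨e1, ⟨a, b, ha1, hab, rfl⟩, e2, ⟨c, d, hc1, hcd, rfl⟩, rfl⟩ := hp
        exact ⟨sgl a + sgl b + (sgl c + sgl d),
          Or.inl ⟨a, b, c, d, ⟨ha1, hab⟩, ⟨hc1, hcd⟩, rfl⟩,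
          by rw [X2, X2, monomial_mul, one_mul]⟩
      · obtain ⟨l, rfl⟩ := hp
        exact ⟨_, Or.inr (Or.inl ⟨l, rfl⟩), (X4 _ _ _ _).symm⟩
      · obtain ⟨i', j', h1, h2, h3, rfl⟩ := hp
        exact ⟨_, Or.inr (Or.inr ⟨i', j', h1, h2, h3, rfl⟩), (X4 _ _ _ _).symm⟩
    · rintro ⟨s, hs, rfl⟩
      rcases hs with ⟨a, b, c, d, ⟨ha1, hab⟩, ⟨hc1, hcd⟩, rfl⟩ | ⟨l, rfl⟩ |
        ⟨i', j', h1, h2, h3, rfl⟩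
      · refine Or.inl (Or.inl ?_)
        rw [Set.mem_mul]
        exact ⟨X a * X b, ⟨a, b, ha1, hab, rfl⟩, X c * X d, ⟨c, d, hc1, hcd, rfl⟩,
          by rw [X2, X2, monomial_mul, one_mul]⟩
      · exact Or.inl (Or.inr ⟨l, (X4 _ _ _ _).symm⟩)
      · exact Or.inr ⟨i', j', h1, h2, h3, (X4 _ _ _ _).symm⟩
  refine ⟨Svar n i j, ?_⟩
  apply le_antisymm
  · intro f hf
    rw [Ideal.mem_colon_span_singleton, hm, hspan, mem_ideal_span_monomial_image] at hf
    rw [mem_ideal_span_X_image]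
    intro ν hν
    have hsup : ν + emv n i j ∈ (f * monomial (emv n i j) (1 : K)).support := by
      rw [mem_support_iff, coeff_mul_monomial, mul_one]
      exact mem_support_iff.mp hν
    obtain ⟨g, hg, hle⟩ := hf _ hsup
    by_contra hcon
    push_neg at hcon
    exact lemA n hn i j hij hnn ν hcon g hg hle
  · rw [Ideal.span_le]
    rintro p ⟨v, hv, rfl⟩
    rw [SetLike.mem_coe, Ideal.mem_colon_span_singleton, hm]
    have hXm : X v * monomial (emv n i j) (1 : K) = monomial (sgl v + emv n i j) 1 := by
      show monomial (sgl v) (1 : K) * monomial (emv n i j) 1 = _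
      rw [monomial_mul, one_mul]
    rw [hXm, hspan, mem_ideal_span_monomial_image]
    intro μ hμ
    rw [support_monomial, if_neg one_ne_zero, Finset.mem_singleton] at hμ
    subst hμ
    exact lemB n hn i j hij hnn v hv
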